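/- Let p be a prime and let r1 and r2 be distinct integers with 0 ≤ r1, r2 ≤ p−1. Suppose C is a covering system of the integers such that the congruence x ≡ r1 (mod p) belongs to C and the congruence x ≡ r2 (mod p) does not belong to C. Then there exists a covering system C' of the integers whose multiset of moduli equals the multiset of moduli of C, such that x ≡ r2 (mod p) belongs to C', x ≡ r1 (mod p) does not belong to C', and moreover for every integer r with r ≢ r1 (mod p), if x ≡ r (mod p) belongs to C then x ≡ r (mod p) belongs to C'. -/

import Mathlib

/-- A covering system of the integers: a finite list of congruences
`x ≡ r (mod m)` (encoded as pairs `(r, m)`) with positive moduli such that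
every integer satisfies at least one congruence in the list. -/
def IsCoveringSystem (C : List (ℤ × ℕ)) : Prop :=
  (∀ c ∈ C, 0 < c.2) ∧ ∀ n : ℤ, ∃ c ∈ C, n ≡ c.1 [ZMOD (c.2 : ℤ)]

/-- The congruence `x ≡ r (mod m)` belongs to the system `C`, where congruences
with the same modulus are identified up to residue equivalence. -/
def MemCong (C : List (ℤ × ℕ)) (r : ℤ) (m : ℕ) : Prop :=
  ∃ c ∈ C, c.2 = m ∧ c.1 ≡ r [ZMOD (m : ℤ)]

/-- shift amount used to swap the classes `r1` and `r2` mod `p`. -/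
def tauFn (p : ℕ) (r1 r2 t x : ℤ) : ℤ :=
  if x % (p : ℤ) = r1 then t else if x % (p : ℤ) = r2 then -t else 0

/-- transform a congruence: shift residues of congruences whose modulus is
divisible by `p`. -/
def swapFn (p : ℕ) (r1 r2 t : ℤ) (c : ℤ × ℕ) : ℤ × ℕ :=
  if p ∣ c.2 then (c.1 + tauFn p r1 r2 t c.1, c.2) else c

theorem stmt0 (p : ℕ) (hp : p.Prime) (r1 r2 : ℤ)
    (hr1 : 0 ≤ r1 ∧ r1 ≤ (p : ℤ) - 1) (hr2 : 0 ≤ r2 ∧ r2 ≤ (p : ℤ) - 1)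
    (hne : r1 ≠ r2)
    (C : List (ℤ × ℕ)) (hC : IsCoveringSystem C)
    (hmem : MemCong C r1 p) (hnmem : ¬ MemCong C r2 p) :
    ∃ C' : List (ℤ × ℕ),
      IsCoveringSystem C' ∧
      (↑(C'.map Prod.snd) : Multiset ℕ) = ↑(C.map Prod.snd) ∧
      MemCong C' r2 p ∧ ¬ MemCong C' r1 p ∧
      ∀ r : ℤ, ¬ r ≡ r1 [ZMOD (p : ℤ)] → MemCong C r p → MemCong C' r p := by
  obtain ⟨hr10, hr11⟩ := hr1
  obtain ⟨hr20, hr21⟩ := hr2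
  obtain ⟨hCpos, hCcov⟩ := hC
  have hp0 : (0:ℤ) < p := by exact_mod_cast hp.pos
  have e1 : r1 % (p:ℤ) = r1 := Int.emod_eq_of_lt hr10 (by omega)
  have e2 : r2 % (p:ℤ) = r2 := Int.emod_eq_of_lt hr20 (by omega)
  -- the product of all moduli and its p-free part
  set N := (C.map Prod.snd).prod with hNdef
  have hN0 : N ≠ 0 := by
    have : 0 < N := List.prod_pos (by
      intro a ha
      obtain ⟨c, hc, rfl⟩ := List.mem_map.1 ha
      exact hCpos c hc)
    omega
  set Q : ℕ := N / p ^ N.factorization p with hQdef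
  have hpQ : ¬ p ∣ Q := Nat.not_dvd_ordCompl hp hN0
  have hQdvd : ∀ m : ℕ, m ∈ C.map Prod.snd → ¬ p ∣ m → m ∣ Q := by
    intro m hm hpm
    have hmN : m ∣ N := List.dvd_prod hm
    have hcop : Nat.Coprime m (p ^ N.factorization p) :=
      (Nat.coprime_comm.mp (hp.coprime_iff_not_dvd.mpr hpm)).pow_right _
    refine hcop.dvd_of_dvd_mul_left ?_
    rw [hQdef, Nat.ordProj_mul_ordCompl_eq_self]
    exact hmN
  -- an inverse of Q mod p
  have hQp : Nat.Coprime Q p := Nat.coprime_comm.mp (hp.coprime_iff_not_dvd.mpr hpQ)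
  have hbez : (1 : ℤ) = Q * Nat.gcdA Q p + p * Nat.gcdB Q p := by
    have := Nat.gcd_eq_gcd_ab Q p
    rwa [hQp.gcd_eq_one] at this
  set d : ℤ := r2 - r1 with hddef
  set t : ℤ := d * Q * Nat.gcdA Q p with htdef
  have htQ : (Q:ℤ) ∣ t := ⟨d * Nat.gcdA Q p, by ring⟩
  have htd : t ≡ d [ZMOD (p:ℤ)] := by
    rw [Int.modEq_iff_dvd]
    exact ⟨d * Nat.gcdB Q p, by rw [htdef]; nlinarith [hbez]⟩
  set τ : ℤ → ℤ := tauFn p r1 r2 t with hτdef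
  set f : ℤ × ℕ → ℤ × ℕ := swapFn p r1 r2 t with hfdef
  have hf2 : ∀ c, (f c).2 = c.2 := by
    intro c; rw [hfdef, swapFn]; split <;> rfl
  -- τ depends only on the class mod p
  have hτcong : ∀ x y : ℤ, x ≡ y [ZMOD (p:ℤ)] → τ x = τ y := by
    intro x y h
    have h' : x % (p:ℤ) = y % (p:ℤ) := h
    rw [hτdef, tauFn, tauFn, h']
  -- key modular facts
  have hr12 : r2 ≠ r1 := fun h => hne h.symm
  have hswap : ∀ x : ℤ, x + τ x + τ (x + τ x) = x := by
    intro x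
    rw [hτdef]
    unfold tauFn
    by_cases h1 : x % (p:ℤ) = r1
    · simp only [h1, if_pos rfl, if_true]
      have hxt : x + t ≡ r1 + d [ZMOD (p:ℤ)] := Int.ModEq.add (show x ≡ r1 [ZMOD (p:ℤ)] by
        show x % (p:ℤ) = r1 % (p:ℤ); rw [h1, e1]) htd
      have hxt' : (x + t) % (p:ℤ) = r2 := by
        have : (x + t) % (p:ℤ) = (r1 + d) % (p:ℤ) := hxt
        rw [this, hddef]; rw [show r1 + (r2 - r1) = r2 by ring, e2]
      rw [hxt', if_neg hr12, if_pos rfl]; ring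
    · rw [if_neg h1]
      by_cases h2 : x % (p:ℤ) = r2
      · rw [if_pos h2]
        have hxt : x + -t ≡ r2 - d [ZMOD (p:ℤ)] := by
          have : x ≡ r2 [ZMOD (p:ℤ)] := by show x % (p:ℤ) = r2 % (p:ℤ); rw [h2, e2]
          have := Int.ModEq.sub this htd
          simpa [sub_eq_add_neg] using this
        have hxt' : (x + -t) % (p:ℤ) = r1 := by
          have : (x + -t) % (p:ℤ) = (r2 - d) % (p:ℤ) := hxt
          rw [this, hddef]; rw [show r2 - (r2 - r1) = r1 by ring, e1]
        rw [hxt', if_pos rfl]; ring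
      · rw [if_neg h2, add_zero, if_neg h1, if_neg h2]; ring
  have hτdvd : ∀ x, (Q:ℤ) ∣ τ x := by
    intro x
    rw [hτdef]; unfold tauFn
    split
    · exact htQ
    · split
      · exact dvd_neg.mpr htQ
      · exact dvd_zero _
  refine ⟨C.map f, ⟨?_, ?_⟩, ?_, ?_, ?_, ?_⟩
  · -- positivity of moduli
    intro c hc
    obtain ⟨c₀, hc₀, rfl⟩ := List.mem_map.1 hc
    rw [hf2]; exact hCpos c₀ hc₀
  · -- covering
    intro n
    obtain ⟨c, hc, hcov⟩ := hCcov (n + τ n)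
    refine ⟨f c, List.mem_map_of_mem (f := f) hc, ?_⟩
    rw [hfdef, swapFn]
    split
    · rename_i hdvd
      -- p ∣ c.2
      simp only
      have hpc2 : (p:ℤ) ∣ (c.2:ℤ) := Int.natCast_dvd_natCast.mpr hdvd
      have hmodp : n + τ n ≡ c.1 [ZMOD (p:ℤ)] := Int.ModEq.of_dvd hpc2 hcov
      have hττ : τ (n + τ n) = τ c.1 := hτcong _ _ hmodp
      have : n = (n + τ n) + τ c.1 := by rw [← hττ, hswap]
      calc n = (n + τ n) + τ c.1 := this
        _ ≡ c.1 + τ c.1 [ZMOD (c.2:ℤ)] := Int.ModEq.add_right _ hcov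
    · rename_i hndvd
      -- p ∤ c.2 : c.2 divides Q divides τ, so n ≡ n + τ n mod c.2
      have hc2Q : c.2 ∣ Q := hQdvd c.2 (List.mem_map_of_mem (f := Prod.snd) hc) hndvd
      have hc2τ : (c.2:ℤ) ∣ τ (n + τ n) :=
        dvd_trans (Int.natCast_dvd_natCast.mpr hc2Q) (hτdvd _)
      have h1 : n ≡ (n + τ n) [ZMOD (c.2:ℤ)] := by
        rw [Int.modEq_iff_dvd]
        have : n + τ n - n = -(τ (n + τ n)) + ((n + τ n) + τ (n + τ n)) - n := by ring
        rw [this, hswap]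
        have : -(τ (n + τ n)) + n - n = -(τ (n + τ n)) := by ring
        rw [this]
        exact dvd_neg.mpr hc2τ
      exact h1.trans hcov
  · -- multiset of moduli
    rw [List.map_map]
    congr 1
    apply List.map_congr_left
    intro c _
    exact hf2 c
  · -- r2 mod p in C'
    obtain ⟨c, hc, hc2, hc1⟩ := hmem
    refine ⟨f c, List.mem_map_of_mem (f := f) hc, ?_, ?_⟩
    · rw [hf2, hc2]
    · rw [hfdef, swapFn, if_pos (hc2 ▸ dvd_refl p)]
      have hc1' : c.1 % (p:ℤ) = r1 := by
        have : c.1 % (p:ℤ) = r1 % (p:ℤ) := hc1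
        rw [this, e1]
      have hτc : τ c.1 = t := by rw [hτdef]; unfold tauFn; rw [if_pos hc1']
      simp only [← hτdef, hτc]
      have h2 : c.1 + t ≡ r1 + d [ZMOD (p:ℤ)] :=
        Int.ModEq.add (show c.1 ≡ r1 [ZMOD (p:ℤ)] from hc1) htd
      have h3 : r1 + d = r2 := by rw [hddef]; ring
      rw [h3] at h2
      exact h2
  · -- r1 mod p not in C'
    rintro ⟨c', hc', hc'2, hc'1⟩
    obtain ⟨c, hc, rfl⟩ := List.mem_map.1 hc'
    have hc2 : c.2 = p := by rw [← hf2 c, hc'2]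
    have hfc : f c = (c.1 + τ c.1, c.2) := by
      rw [hfdef, swapFn, if_pos (hc2 ▸ dvd_refl p)]
    rw [hfc] at hc'1
    simp only at hc'1
    by_cases h1 : c.1 % (p:ℤ) = r1
    · have hτc : τ c.1 = t := by rw [hτdef]; unfold tauFn; rw [if_pos h1]
      rw [hτc] at hc'1
      have h2 : c.1 + t ≡ r1 + d [ZMOD (p:ℤ)] := Int.ModEq.add (show c.1 ≡ r1 [ZMOD (p:ℤ)] by
        show c.1 % (p:ℤ) = r1 % (p:ℤ); rw [h1, e1]) htd
      have : r2 ≡ r1 [ZMOD (p:ℤ)] := by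
        have : r1 + d = r2 := by rw [hddef]; ring
        rw [this] at h2
        exact h2.symm.trans hc'1
      have : r2 % (p:ℤ) = r1 % (p:ℤ) := this
      rw [e1, e2] at this
      exact hr12 this
    · by_cases h2 : c.1 % (p:ℤ) = r2
      · exact hnmem ⟨c, hc, hc2, by show c.1 % (p:ℤ) = r2 % (p:ℤ); rw [h2, e2]⟩
      · have hτc : τ c.1 = 0 := by rw [hτdef]; unfold tauFn; rw [if_neg h1, if_neg h2]
        rw [hτc, add_zero] at hc'1
        have : c.1 % (p:ℤ) = r1 % (p:ℤ) := hc'1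
        rw [e1] at this
        exact h1 this
  · -- preservation of other modulus-p congruences
    intro r hr ⟨c, hc, hc2, hc1⟩
    by_cases h1 : c.1 % (p:ℤ) = r1
    · exfalso
      apply hr
      have hcr1 : c.1 ≡ r1 [ZMOD (p:ℤ)] := by show c.1 % (p:ℤ) = r1 % (p:ℤ); rw [h1, e1]
      exact hc1.symm.trans hcr1
    · by_cases h2 : c.1 % (p:ℤ) = r2
      · exact absurd ⟨c, hc, hc2, by show c.1 % (p:ℤ) = r2 % (p:ℤ); rw [h2, e2]⟩ hnmem
      · refine ⟨f c, List.mem_map_of_mem (f := f) hc, ?_, ?_⟩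
        · rw [hf2, hc2]
        · have hτc : τ c.1 = 0 := by rw [hτdef]; unfold tauFn; rw [if_neg h1, if_neg h2]
          rw [hfdef, swapFn, if_pos (hc2 ▸ dvd_refl p)]
          simpa only [← hτdef, hτc, add_zero] using hc1
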